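/- Unitary Hodge decomposition for the half-operators: let (g,k) be Hermitian symmetric and M ∈ O unitary. Then ker C⁺ = im C⁺ ⊕ ker D and ker C⁻ = im C⁻ ⊕ ker D, where D = C⁺ + C⁻, and both direct sums are orthogonal. Abstractly: if C⁺, C⁻ are operators on an inner product space with (C⁺)² = (C⁻)² = 0, (C^±)^adj = −C^∓, and V = ker D ⊕ im D for D = C⁺ + C⁻, then ker C⁺ = im C⁺ ⊕ ker D orthogonally. -/

import Mathlib

/-- ker D kills Cp. -/
lemma aux_kerD {V : Type*} [NormedAddCommGroup V] [InnerProductSpace ℂ V]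
    (Cp Cm : Module.End ℂ V)
    (hm2 : Cm * Cm = 0)
    (hadjp : ∀ x y : V, (inner ℂ (Cp x) y : ℂ) = - inner ℂ x (Cm y)) :
    ∀ y : V, (Cp + Cm) y = 0 → Cp y = 0 := by
  intro y hy
  have h1 : Cp y = -(Cm y) := by
    have : Cp y + Cm y = 0 := hy
    rw [eq_neg_iff_add_eq_zero]; exact this
  have h2 : Cm (Cp y) = 0 := by
    rw [h1, map_neg]
    have := LinearMap.congr_fun hm2 y
    simp only [Module.End.mul_apply, LinearMap.zero_apply] at this
    simp [this]
  have h3 : (inner ℂ (Cp y) (Cp y) : ℂ) = 0 := by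
    rw [hadjp, h2, inner_zero_right, neg_zero]
  exact inner_self_eq_zero.mp h3

lemma aux_half {V : Type*} [NormedAddCommGroup V] [InnerProductSpace ℂ V]
    (Cp Cm : Module.End ℂ V)
    (hp2 : Cp * Cp = 0) (hm2 : Cm * Cm = 0)
    (hadjp : ∀ x y : V, (inner ℂ (Cp x) y : ℂ) = - inner ℂ x (Cm y))
    (hadjm : ∀ x y : V, (inner ℂ (Cm x) y : ℂ) = - inner ℂ x (Cp y))
    (hcompl : IsCompl (LinearMap.ker (Cp + Cm)) (LinearMap.range (Cp + Cm))) :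
    (LinearMap.ker Cp = LinearMap.range Cp ⊔ LinearMap.ker (Cp + Cm) ∧
     Disjoint (LinearMap.range Cp) (LinearMap.ker (Cp + Cm)) ∧
     ∀ x ∈ LinearMap.range Cp, ∀ y ∈ LinearMap.ker (Cp + Cm),
       (inner ℂ x y : ℂ) = 0) := by
  have hkerm : ∀ y : V, (Cp + Cm) y = 0 → Cm y = 0 := by
    intro y hy
    refine aux_kerD Cm Cp hp2 hadjm y ?_
    rw [show Cm + Cp = Cp + Cm from add_comm _ _]; exact hy
  have hkerp := aux_kerD Cp Cm hm2 hadjp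
  have horth : ∀ x ∈ LinearMap.range Cp, ∀ y ∈ LinearMap.ker (Cp + Cm),
      (inner ℂ x y : ℂ) = 0 := by
    rintro x ⟨z, rfl⟩ y hy
    rw [hadjp, hkerm y hy, inner_zero_right, neg_zero]
  refine ⟨?_, ?_, horth⟩
  · apply le_antisymm
    · intro x hx
      have hxk : Cp x = 0 := hx
      obtain ⟨a, b, ha, hb, hab⟩ :=
        Submodule.codisjoint_iff_exists_add_eq.mp hcompl.codisjoint x
      obtain ⟨z, rfl⟩ := hb
      have hCpa : Cp a = 0 := hkerp a ha
      have hz : Cp (Cm z) = 0 := by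
        have h0 : Cp (a + (Cp + Cm) z) = 0 := by rw [hab]; exact hxk
        have h1 : Cp (Cp z) = 0 := by
          have := LinearMap.congr_fun hp2 z
          simpa using this
        simp only [map_add, LinearMap.add_apply, hCpa, h1, zero_add] at h0
        simpa using h0
      have hz2 : Cm (Cm z) = 0 := by
        have := LinearMap.congr_fun hm2 z
        simpa using this
      have hmem : a + Cm z ∈ LinearMap.ker (Cp + Cm) := by
        simp only [LinearMap.mem_ker, LinearMap.add_apply, map_add] at ha ⊢
        rw [hz, hz2]
        simpa using ha
      have : x = Cp z + (a + Cm z) := by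
        rw [← hab]; simp [LinearMap.add_apply]; abel
      rw [this]
      exact Submodule.add_mem_sup (LinearMap.mem_range_self _ z) hmem
    · refine sup_le ?_ ?_
      · rintro x ⟨z, rfl⟩
        have := LinearMap.congr_fun hp2 z
        simpa using this
      · intro y hy
        exact hkerp y hy
  · rw [Submodule.disjoint_def]
    intro x hx hy
    have := horth x hx x hy
    exact inner_self_eq_zero.mp this

/-- unitary Hodge decomposition for the half-operators: let `C⁺, C⁻` be
operators on a complex inner product space `V` with `(C⁺)² = (C⁻)² = 0`,
`(C^±)^adj = −C^∓`, and suppose `V = ker D ⊕ im D` for `D = C⁺ + C⁻`.  Then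
`ker C⁺ = im C⁺ ⊕ ker D` and `ker C⁻ = im C⁻ ⊕ ker D`, both direct sums orthogonal. -/
theorem stmt17 {V : Type*} [NormedAddCommGroup V] [InnerProductSpace ℂ V]
    (Cp Cm : Module.End ℂ V)
    (hp2 : Cp * Cp = 0) (hm2 : Cm * Cm = 0)
    (hadjp : ∀ x y : V, (inner ℂ (Cp x) y : ℂ) = - inner ℂ x (Cm y))
    (hadjm : ∀ x y : V, (inner ℂ (Cm x) y : ℂ) = - inner ℂ x (Cp y))
    (hcompl : IsCompl (LinearMap.ker (Cp + Cm)) (LinearMap.range (Cp + Cm))) :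
    (LinearMap.ker Cp = LinearMap.range Cp ⊔ LinearMap.ker (Cp + Cm) ∧
     Disjoint (LinearMap.range Cp) (LinearMap.ker (Cp + Cm)) ∧
     ∀ x ∈ LinearMap.range Cp, ∀ y ∈ LinearMap.ker (Cp + Cm),
       (inner ℂ x y : ℂ) = 0) ∧
    (LinearMap.ker Cm = LinearMap.range Cm ⊔ LinearMap.ker (Cp + Cm) ∧
     Disjoint (LinearMap.range Cm) (LinearMap.ker (Cp + Cm)) ∧
     ∀ x ∈ LinearMap.range Cm, ∀ y ∈ LinearMap.ker (Cp + Cm),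
       (inner ℂ x y : ℂ) = 0) := by
  have hc' : IsCompl (LinearMap.ker (Cm + Cp)) (LinearMap.range (Cm + Cp)) := by
    rwa [add_comm Cm Cp]
  have h2 := aux_half Cm Cp hm2 hp2 hadjm hadjp hc'
  rw [add_comm Cm Cp] at h2
  exact ⟨aux_half Cp Cm hp2 hm2 hadjp hadjm hcompl, h2⟩
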